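/- For every ν ≥ 1/2 and R ≥ 1, ∫₀^∞ e^{−ντ} e^{−R sinh τ} (sinh τ)^{1/2} dτ ≤ C/(ν − 1/2 + R) for an absolute constant C. -/

import Mathlib

open Real MeasureTheory

lemma exp_neg_mul_integral_Ioi {a : ℝ} (ha : 0 < a) :
    ∫ x in Set.Ioi (0 : ℝ), Real.exp (-(a * x)) = 1 / a := by
  have := MeasureTheory.integral_comp_mul_left_Ioi (fun x => Real.exp (-x)) 0 ha
  simp only [mul_zero, integral_exp_neg_Ioi, neg_zero, Real.exp_zero, smul_eq_mul,
    mul_one] at this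
  simpa [one_div] using this

theorem schlafli_derivative_tail_estimate :
    ∃ C : ℝ, ∀ ν : ℝ, (1/2 : ℝ) ≤ ν → ∀ R : ℝ, 1 ≤ R →
      ∫ τ in Set.Ioi (0 : ℝ),
          Real.exp (-(ν * τ)) * Real.exp (-(R * Real.sinh τ)) * Real.sqrt (Real.sinh τ)
        ≤ C / (ν - 1/2 + R) := by
  refine ⟨1, fun ν hν R hR => ?_⟩
  set a : ℝ := ν - 1/2 + R with ha_def
  have ha : 0 < a := by simp only [ha_def]; linarith
  have key : ∫ τ in Set.Ioi (0 : ℝ),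
      Real.exp (-(ν * τ)) * Real.exp (-(R * Real.sinh τ)) * Real.sqrt (Real.sinh τ)
      ≤ ∫ τ in Set.Ioi (0 : ℝ), Real.exp (-(a * τ)) := by
    apply MeasureTheory.integral_mono_of_nonneg
    · filter_upwards with τ
      positivity
    · exact (exp_neg_integrableOn_Ioi 0 ha).congr_fun
        (fun x _ => by simp only [neg_mul]) measurableSet_Ioi
    · filter_upwards [MeasureTheory.ae_restrict_mem measurableSet_Ioi] with τ hτ
      simp only [Set.mem_Ioi] at hτ
      have hs : τ ≤ Real.sinh τ := (Real.self_lt_sinh_iff.mpr hτ).le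
      have h1 : Real.exp (-(R * Real.sinh τ)) ≤ Real.exp (-(R * τ)) := by
        apply Real.exp_le_exp.mpr
        nlinarith
      have h2 : Real.sqrt (Real.sinh τ) ≤ Real.exp (τ / 2) := by
        have hse : Real.sinh τ ≤ Real.exp τ := by
          rw [Real.sinh_eq]
          have := Real.exp_pos (-τ)
          have := Real.exp_pos τ
          linarith
        calc Real.sqrt (Real.sinh τ) ≤ Real.sqrt (Real.exp τ) := Real.sqrt_le_sqrt hse
          _ = Real.exp (τ / 2) := by
              rw [show Real.exp τ = Real.exp (τ / 2) * Real.exp (τ / 2) by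
                  rw [← Real.exp_add]; ring_nf,
                Real.sqrt_mul_self (Real.exp_pos _).le]
      calc Real.exp (-(ν * τ)) * Real.exp (-(R * Real.sinh τ)) * Real.sqrt (Real.sinh τ)
          ≤ Real.exp (-(ν * τ)) * Real.exp (-(R * τ)) * Real.exp (τ / 2) := by
            apply mul_le_mul (mul_le_mul le_rfl h1 (Real.exp_pos _).le (Real.exp_pos _).le)
              h2 (Real.sqrt_nonneg _) (by positivity)
        _ = Real.exp (-(a * τ)) := by
            rw [← Real.exp_add, ← Real.exp_add]
            congr 1
            simp only [ha_def]
            ring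
  calc _ ≤ ∫ τ in Set.Ioi (0 : ℝ), Real.exp (-(a * τ)) := key
    _ = 1 / a := exp_neg_mul_integral_Ioi ha
    _ = 1 / (ν - 1/2 + R) := by rw [ha_def]
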